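/- arXiv:1507.06077 — 2 statements merged into one kernel-verified Lean document; each statement's English description precedes it below -/
import Mathlib

section
/- Let $J$ be an infinite set and $\lambda,\chi\in\mathbb{R}^J$ satisfy the positive energy condition for $W(A_J)$. Then the triple $(J,\lambda,\chi)$ is essentially bounded: for every $m$ in the range of $\lambda$, if $m$ is not the supremum of the range of $\lambda$ then $\{d_j:\lambda_j=m\}$ is bounded below, and if $m$ is not the infimum of the range of $\lambda$ then $\{d_j:\lambda_j=m\}$ is bounded above. -/
open scoped BigOperators

/-- A permutation of `J` is finitely supported if it fixes all but finitely many elements. -/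
def IsFinPerm {J : Type*} (w : Equiv.Perm J) : Prop := {j | w j ≠ j}.Finite

/-- A finitely supported sign function: takes values `±1` and equals `1` outside a finite set. -/
def IsSign {J : Type*} (σ : J → ℝ) : Prop :=
  (∀ j, σ j = 1 ∨ σ j = -1) ∧ {j | σ j ≠ 1}.Finite

/-- A finitely supported sign function whose support has even cardinality. -/
def IsEvenSign {J : Type*} (σ : J → ℝ) : Prop :=
  IsSign σ ∧ ∃ F : Finset J, (∀ j, σ j = -1 ↔ j ∈ F) ∧ Even F.card

/-- The energy `λ(w⁻¹.χ - χ) = ∑ⱼ λⱼ (d_{w(j)} - dⱼ)` (a finite sum for `w` finitely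
supported). -/
noncomputable def energyA {J : Type*} (lam d : J → ℝ) (w : Equiv.Perm J) : ℝ :=
  ∑ᶠ j, lam j * (d (w j) - d j)

/-- The energy `λ(σ w⁻¹.χ - χ) = ∑ⱼ λⱼ (σⱼ d_{w(j)} - dⱼ)`. -/
noncomputable def energyB {J : Type*} (lam d σ : J → ℝ) (w : Equiv.Perm J) : ℝ :=
  ∑ᶠ j, lam j * (σ j * d (w j) - d j)

/-- Positive energy condition for `W(A_J)`. -/
def PECA {J : Type*} (lam d : J → ℝ) : Prop :=
  ∃ C : ℝ, ∀ w : Equiv.Perm J, IsFinPerm w → C ≤ energyA lam d w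

/-- Positive energy condition for `W(B_J)`. -/
def PECB {J : Type*} (lam d : J → ℝ) : Prop :=
  ∃ C : ℝ, ∀ (σ : J → ℝ) (w : Equiv.Perm J), IsSign σ → IsFinPerm w → C ≤ energyB lam d σ w

/-- Positive energy condition for `W(D_J)`. -/
def PECD {J : Type*} (lam d : J → ℝ) : Prop :=
  ∃ C : ℝ, ∀ (σ : J → ℝ) (w : Equiv.Perm J), IsEvenSign σ → IsFinPerm w → C ≤ energyB lam d σ w

lemma isFinPerm_swap {J : Type*} [DecidableEq J] (a b : J) :
    IsFinPerm (Equiv.swap a b) := by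
  apply Set.Finite.subset (Set.toFinite ({a, b} : Set J))
  intro j hj
  by_contra h
  simp only [Set.mem_insert_iff, Set.mem_singleton_iff, not_or] at h
  exact hj (Equiv.swap_apply_of_ne_of_ne h.1 h.2)

lemma energyA_swap {J : Type*} [DecidableEq J] (lam d : J → ℝ) (a b : J) (hab : a ≠ b) :
    energyA lam d (Equiv.swap a b) = (lam a - lam b) * (d b - d a) := by
  have hsub : (Function.support fun j => lam j * (d (Equiv.swap a b j) - d j))
      ⊆ (({a, b} : Finset J) : Set J) := by
    intro j hj
    by_contra h
    simp only [Finset.coe_insert, Finset.coe_singleton, Set.mem_insert_iff,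
      Set.mem_singleton_iff, not_or] at h
    apply hj
    simp only [Equiv.swap_apply_of_ne_of_ne h.1 h.2]
    ring
  rw [energyA, finsum_eq_sum_of_support_subset _ hsub, Finset.sum_pair hab,
    Equiv.swap_apply_left, Equiv.swap_apply_right]
  ring

theorem pecA_essentially_bounded (J : Type*) [Infinite J] (lam d : J → ℝ)
    (hpec : PECA lam d) :
    ∀ m ∈ Set.range lam,
      ((∃ n ∈ Set.range lam, m < n) → BddBelow (d '' {j | lam j = m})) ∧
      ((∃ n ∈ Set.range lam, n < m) → BddAbove (d '' {j | lam j = m})) := by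
  classical
  obtain ⟨C, hC⟩ := hpec
  intro m _
  constructor
  · rintro ⟨n, ⟨j0, rfl⟩, hmn⟩
    refine ⟨d j0 + C / (lam j0 - m), ?_⟩
    rintro x ⟨j, hj, rfl⟩
    have hjm : lam j = m := hj
    have hne : j0 ≠ j := fun h => by rw [h, hjm] at hmn; exact lt_irrefl _ hmn
    have := hC (Equiv.swap j0 j) (isFinPerm_swap j0 j)
    rw [energyA_swap lam d j0 j hne, hjm] at this
    have hpos : 0 < lam j0 - m := by linarith
    have : C / (lam j0 - m) ≤ d j - d j0 := by
      rw [div_le_iff₀ hpos] at *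
      linarith [this]
    linarith
  · rintro ⟨n, ⟨j0, rfl⟩, hmn⟩
    refine ⟨d j0 + C / (lam j0 - m), ?_⟩
    rintro x ⟨j, hj, rfl⟩
    have hjm : lam j = m := hj
    have hne : j0 ≠ j := fun h => by rw [h, hjm] at hmn; exact lt_irrefl _ hmn
    have := hC (Equiv.swap j0 j) (isFinPerm_swap j0 j)
    rw [energyA_swap lam d j0 j hne, hjm] at this
    have hneg : lam j0 - m < 0 := by linarith
    have : d j - d j0 ≤ C / (lam j0 - m) := by
      rw [le_div_iff_of_neg hneg]
      linarith [this]
    linarith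
end

section
/- Let $J$ be an infinite set and $\lambda=(\lambda_j),\chi=(d_j)\in\mathbb{R}^J$ with $\lambda$ of finite range. Then $(J,\lambda,\chi)$ satisfies the positive energy condition for $W(D_J)$ if and only if it satisfies the positive energy condition for $W(B_J)$. -/
open scoped BigOperators

section Aux
variable {J : Type*} (lam d : J → ℝ)

lemma energyB_eq_sum (σ : J → ℝ) (w : Equiv.Perm J) (S : Finset J)
    (h1 : ∀ j, σ j ≠ 1 → j ∈ S) (h2 : ∀ j, w j ≠ j → j ∈ S) :
    energyB lam d σ w = ∑ j ∈ S, lam j * (σ j * d (w j) - d j) := by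
  apply finsum_eq_sum_of_support_subset
  intro j hj
  simp only [Function.mem_support] at hj
  by_contra hjS
  have hσ : σ j = 1 := by by_contra h; exact hjS (h1 j h)
  have hw : w j = j := by by_contra h; exact hjS (h2 j h)
  rw [hσ, hw] at hj
  simp at hj

lemma isFinPerm_swap_s15 [DecidableEq J] (j k : J) : IsFinPerm (Equiv.swap j k) := by
  apply Set.Finite.subset ((Set.finite_singleton k).insert j)
  intro i hi
  simp only [Set.mem_setOf_eq] at hi
  contrapose! hi
  simp only [Set.mem_insert_iff, Set.mem_singleton_iff] at hi
  push_neg at hi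
  exact Equiv.swap_apply_of_ne_of_ne hi.1 hi.2

lemma isEvenSign_one : IsEvenSign (fun _ : J => (1:ℝ)) := by
  refine ⟨⟨fun j => Or.inl rfl, by simp⟩, ∅, fun j => ?_, Even.zero⟩
  norm_num

lemma energy_swap [DecidableEq J] (j k : J) (hjk : j ≠ k) :
    energyB lam d (fun _ => 1) (Equiv.swap j k)
      = lam j * (d k - d j) + lam k * (d j - d k) := by
  rw [energyB_eq_sum lam d _ _ {j, k} (by simp) ?h2]
  · rw [Finset.sum_pair hjk]
    simp [Equiv.swap_apply_left, Equiv.swap_apply_right]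
  case h2 =>
    intro i hi
    contrapose! hi
    simp only [Finset.mem_insert, Finset.mem_singleton] at hi
    push_neg at hi
    exact Equiv.swap_apply_of_ne_of_ne hi.1 hi.2

lemma isEvenSign_pair [DecidableEq J] (j k : J) (hjk : j ≠ k) :
    IsEvenSign (fun i : J => if i = j ∨ i = k then (-1:ℝ) else 1) := by
  constructor
  · constructor
    · intro i; by_cases h : i = j ∨ i = k <;> simp [h]
    · apply Set.Finite.subset ((Set.finite_singleton k).insert j)
      intro i hi
      simp only [Set.mem_setOf_eq] at hi
      contrapose! hi
      simp only [Set.mem_insert_iff, Set.mem_singleton_iff] at hi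
      push_neg at hi
      simp [hi.1, hi.2]
  · refine ⟨{j, k}, fun i => ?_, ?_⟩
    · by_cases h : i = j ∨ i = k
      · simp only [h, if_true]
        simp only [Finset.mem_insert, Finset.mem_singleton]
        tauto
      · push_neg at h
        simp only [h.1, h.2, or_self, if_false]
        simp only [Finset.mem_insert, Finset.mem_singleton, h.1, h.2, or_self]
        norm_num
    · rw [Finset.card_pair hjk]
      exact even_two

lemma energy_pairflip_swap [DecidableEq J] (j k : J) (hjk : j ≠ k) :
    energyB lam d (fun i => if i = j ∨ i = k then (-1:ℝ) else 1) (Equiv.swap j k)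
      = lam j * (-d k - d j) + lam k * (-d j - d k) := by
  rw [energyB_eq_sum lam d _ _ {j, k} ?h1 ?h2]
  · rw [Finset.sum_pair hjk]
    simp [Equiv.swap_apply_left, Equiv.swap_apply_right]
  case h1 =>
    intro i hi
    contrapose! hi
    simp only [Finset.mem_insert, Finset.mem_singleton] at hi
    push_neg at hi
    simp [hi.1, hi.2]
  case h2 =>
    intro i hi
    contrapose! hi
    simp only [Finset.mem_insert, Finset.mem_singleton] at hi
    push_neg at hi
    exact Equiv.swap_apply_of_ne_of_ne hi.1 hi.2

lemma helper_nonpos {x c C₁ : ℝ} (hc : c ≠ 0)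
    (h : ∀ M, ∃ y, c * y < M ∧ C₁ ≤ x * y) : x * c ≤ 0 := by
  by_contra hxc
  push_neg at hxc
  obtain ⟨y, hy1, hy2⟩ := h ((C₁ - 1) * (c * c) / (x * c))
  have hc2 : (0:ℝ) < c * c := mul_self_pos.mpr hc
  have hM : (x * c) * ((C₁ - 1) * (c * c) / (x * c)) = (C₁ - 1) * (c * c) := by
    field_simp
    exact mul_div_cancel_left₀ _ (left_ne_zero_of_mul hxc.ne')
  have h3 : (x * c) * (c * y) < (C₁ - 1) * (c * c) := by
    rw [← hM]; exact mul_lt_mul_of_pos_left hy1 hxc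
  have h4 : (x * y) * (c * c) < (C₁ - 1) * (c * c) := by nlinarith [h3]
  have h5 : x * y < C₁ - 1 := lt_of_mul_lt_mul_right (by linarith) (le_of_lt hc2)
  linarith



lemma isSign_abs {J : Type*} {σ : J → ℝ} (hσ : IsSign σ) (j : J) : |σ j| = 1 := by
  rcases hσ.1 j with h | h <;> rw [h] <;> norm_num

lemma sign_dichotomy {J : Type*} {σ : J → ℝ} (hσ : IsSign σ) (j : J) :
    σ j = -1 ↔ σ j ≠ 1 := by
  rcases hσ.1 j with h | h <;> rw [h] <;> norm_num

lemma pecB_of_case1 {J : Type*} (lam d : J → ℝ) (C M : ℝ)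
    (hC : ∀ (σ : J → ℝ) (w : Equiv.Perm J), IsEvenSign σ → IsFinPerm w →
      C ≤ energyB lam d σ w)
    (hM : {j | -M ≤ lam j * d j}.Infinite) : PECB lam d := by
  classical
  refine ⟨min C (C - 2 * M), fun σ w hσ hw => ?_⟩
  set Fσ := hσ.2.toFinset with hFσ
  have hmemF : ∀ j, j ∈ Fσ ↔ σ j ≠ 1 := fun j => hσ.2.mem_toFinset
  rcases Nat.even_or_odd Fσ.card with he | ho
  · have hev : IsEvenSign σ :=
      ⟨hσ, Fσ, fun j => (sign_dichotomy hσ j).trans (hmemF j).symm, he⟩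
    exact le_trans (min_le_left _ _) (hC σ w hev hw)
  · obtain ⟨j₀, hj₀⟩ := (hM.diff (hσ.2.union hw)).nonempty
    have hs0 : -M ≤ lam j₀ * d j₀ := hj₀.1
    have hσ0 : σ j₀ = 1 := by
      have := hj₀.2
      simp only [Set.mem_union, Set.mem_setOf_eq] at this
      push_neg at this
      exact this.1
    have hw0 : w j₀ = j₀ := by
      have := hj₀.2
      simp only [Set.mem_union, Set.mem_setOf_eq] at this
      push_neg at this
      exact this.2
    set σ' := Function.update σ j₀ (-1 : ℝ) with hσ'def
    set S : Finset J := insert j₀ (Fσ ∪ hw.toFinset) with hSdef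
    have hj₀S : j₀ ∈ S := Finset.mem_insert_self _ _
    have e1 : energyB lam d σ w = ∑ j ∈ S, lam j * (σ j * d (w j) - d j) := by
      apply energyB_eq_sum
      · intro j hj
        exact Finset.mem_insert_of_mem (Finset.mem_union_left _ ((hmemF j).mpr hj))
      · intro j hj
        exact Finset.mem_insert_of_mem (Finset.mem_union_right _ (hw.mem_toFinset.mpr hj))
    have e2 : energyB lam d σ' w = ∑ j ∈ S, lam j * (σ' j * d (w j) - d j) := by
      apply energyB_eq_sum
      · intro j hj
        rcases eq_or_ne j j₀ with rfl | hne
        · exact hj₀S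
        · rw [hσ'def, Function.update_of_ne hne] at hj
          exact Finset.mem_insert_of_mem (Finset.mem_union_left _ ((hmemF j).mpr hj))
      · intro j hj
        exact Finset.mem_insert_of_mem (Finset.mem_union_right _ (hw.mem_toFinset.mpr hj))
    rw [← Finset.add_sum_erase _ _ hj₀S] at e1 e2
    have hsame : ∀ j ∈ S.erase j₀,
        lam j * (σ' j * d (w j) - d j) = lam j * (σ j * d (w j) - d j) := by
      intro j hj
      rw [hσ'def, Function.update_of_ne (Finset.ne_of_mem_erase hj)]
    rw [Finset.sum_congr rfl hsame] at e2
    have hσ'j₀ : σ' j₀ = -1 := Function.update_self _ _ _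
    have hEE : energyB lam d σ w = energyB lam d σ' w + 2 * (lam j₀ * d j₀) := by
      rw [e1, e2, hσ'j₀, hσ0, hw0]
      ring
    have hev' : IsEvenSign σ' := by
      refine ⟨⟨?_, ?_⟩, insert j₀ Fσ, ?_, ?_⟩
      · intro j
        rcases eq_or_ne j j₀ with rfl | hne
        · rw [hσ'j₀]; exact Or.inr rfl
        · rw [hσ'def, Function.update_of_ne hne]; exact hσ.1 j
      · apply Set.Finite.subset (hσ.2.insert j₀)
        intro j hj
        simp only [Set.mem_setOf_eq] at hj
        rcases eq_or_ne j j₀ with rfl | hne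
        · exact Set.mem_insert _ _
        · rw [hσ'def, Function.update_of_ne hne] at hj
          exact Set.mem_insert_of_mem _ hj
      · intro j
        rcases eq_or_ne j j₀ with rfl | hne
        · simp [hσ'j₀]
        · rw [hσ'def, Function.update_of_ne hne]
          rw [Finset.mem_insert]
          rw [(sign_dichotomy hσ j).trans (hmemF j).symm]
          simp [hne]
      · have hj₀F : j₀ ∉ Fσ := fun h => ((hmemF j₀).mp h) hσ0
        rw [Finset.card_insert_of_notMem hj₀F]
        exact Odd.add_one ho
    have hE' : C ≤ energyB lam d σ' w := hC σ' w hev' hw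
    have : C - 2 * M ≤ energyB lam d σ w := by
      rw [hEE]; linarith
    exact le_trans (min_le_right _ _) this

lemma stepA {J : Type*} (lam d : J → ℝ) (C : ℝ)
    (hC : ∀ (σ : J → ℝ) (w : Equiv.Perm J), IsEvenSign σ → IsFinPerm w →
      C ≤ energyB lam d σ w)
    (h2 : ∀ M : ℝ, {j | M ≤ lam j * d j}.Finite)
    (c : ℝ) (hc0 : c ≠ 0) (hcinf : {j | lam j = c}.Infinite) (j₀ : J) :
    |lam j₀| ≤ |c| := by
  classical
  have havail : ∀ M : ℝ, ∃ k, lam k = c ∧ k ≠ j₀ ∧ c * d k < M := by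
    intro M
    obtain ⟨k, hk⟩ := (hcinf.diff ((h2 M).union (Set.finite_singleton j₀))).nonempty
    have hk2 := hk.2
    simp only [Set.mem_union, Set.mem_setOf_eq, Set.mem_singleton_iff] at hk2
    push_neg at hk2
    refine ⟨k, hk.1, hk2.2, ?_⟩
    have := hk2.1
    rw [show lam k = c from hk.1] at this
    exact this
  have hT : ∀ k, lam k = c → k ≠ j₀ →
      C + (lam j₀ - c) * d j₀ ≤ (lam j₀ - c) * d k := by
    intro k hk hkj
    have h := hC (fun _ => 1) (Equiv.swap j₀ k) isEvenSign_one (isFinPerm_swap_s15 j₀ k)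
    rw [energy_swap lam d j₀ k (Ne.symm hkj)] at h
    rw [hk] at h
    nlinarith [h]
  have hX : ∀ k, lam k = c → k ≠ j₀ →
      C + (lam j₀ + c) * d j₀ ≤ (-(lam j₀ + c)) * d k := by
    intro k hk hkj
    have h := hC _ (Equiv.swap j₀ k) (isEvenSign_pair j₀ k (Ne.symm hkj))
      (isFinPerm_swap_s15 j₀ k)
    rw [energy_pairflip_swap lam d j₀ k (Ne.symm hkj)] at h
    rw [hk] at h
    nlinarith [h]
  have hTc : (lam j₀ - c) * c ≤ 0 := by
    apply helper_nonpos hc0 (C₁ := C + (lam j₀ - c) * d j₀)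
    intro M
    obtain ⟨k, hk1, hk2, hk3⟩ := havail M
    exact ⟨d k, hk3, hT k hk1 hk2⟩
  have hXc : (-(lam j₀ + c)) * c ≤ 0 := by
    apply helper_nonpos hc0 (C₁ := C + (lam j₀ + c) * d j₀)
    intro M
    obtain ⟨k, hk1, hk2, hk3⟩ := havail M
    exact ⟨d k, hk3, hX k hk1 hk2⟩
  have h1 : lam j₀ * c ≤ c * c := by nlinarith [hTc]
  have h2' : -(c * c) ≤ lam j₀ * c := by nlinarith [hXc]
  have habs : |lam j₀ * c| ≤ c * c := abs_le.mpr ⟨h2', h1⟩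
  rw [abs_mul] at habs
  have hcc : c * c = |c| * |c| := (abs_mul_abs_self c).symm
  rw [hcc] at habs
  exact le_of_mul_le_mul_right habs (abs_pos.mpr hc0)

lemma pecB_of_case2 {J : Type*} [Infinite J] (lam d : J → ℝ) (C : ℝ)
    (hfin : (Set.range lam).Finite)
    (hC : ∀ (σ : J → ℝ) (w : Equiv.Perm J), IsEvenSign σ → IsFinPerm w →
      C ≤ energyB lam d σ w)
    (h2 : ∀ M : ℝ, {j | M ≤ lam j * d j}.Finite) : PECB lam d := by
  classical
  have hfib : ∃ c, {j | lam j = c}.Infinite := by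
    by_contra h
    push_neg at h
    have hsub : (Set.univ : Set J) ⊆ ⋃ b ∈ Set.range lam, {j | lam j = b} := by
      intro j _
      exact Set.mem_biUnion ⟨j, rfl⟩ rfl
    have : (Set.univ : Set J).Finite :=
      Set.Finite.subset (Set.Finite.biUnion hfin fun b _ => h b) hsub
    exact Set.infinite_univ this
  obtain ⟨c, hcinf⟩ := hfib
  have hfibne : ∀ b : ℝ, {j | lam j = b}.Infinite → b ≠ 0 := by
    intro b hb hb0
    apply hb
    apply Set.Finite.subset (h2 0)
    intro j hj
    simp only [Set.mem_setOf_eq] at hj ⊢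
    rw [hj, hb0]
    simp
  have hc0 : c ≠ 0 := hfibne c hcinf
  set a := |c| with ha
  have ha0 : (0:ℝ) < a := abs_pos.mpr hc0
  have hle : ∀ j, |lam j| ≤ a := stepA lam d C hC h2 c hc0 hcinf
  have hkey : ∀ b : ℝ, {j | lam j = b}.Infinite → |b| = a := by
    intro b hb
    have hball := stepA lam d C hC h2 b (hfibne b hb) hb
    obtain ⟨j, hj⟩ := hcinf.nonempty
    obtain ⟨i, hi⟩ := hb.nonempty
    have h1 : a ≤ |b| := by rw [ha, ← hj]; exact hball j
    have h2' : |b| ≤ a := by rw [← hi]; exact hle i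
    linarith
  have hA : {j | |lam j| ≠ a}.Finite := by
    have hsub : {j | |lam j| ≠ a} ⊆
        ⋃ b ∈ {b : ℝ | b ∈ Set.range lam ∧ |b| ≠ a}, {j | lam j = b} := by
      intro j hj
      exact Set.mem_biUnion ⟨⟨j, rfl⟩, hj⟩ rfl
    apply Set.Finite.subset ?_ hsub
    apply Set.Finite.biUnion (hfin.subset (fun b hb => hb.1))
    intro b hb
    by_contra hinf
    exact hb.2 (hkey b hinf)
  have hB : {j | 0 < lam j * d j}.Finite := by
    apply (h2 0).subset
    intro j hj
    simp only [Set.mem_setOf_eq] at hj ⊢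
    exact le_of_lt hj
  have hFfin : ({j | |lam j| ≠ a} ∪ {j | 0 < lam j * d j}).Finite := hA.union hB
  set Fs := hFfin.toFinset with hFs
  set K := ∑ i ∈ Fs, 2 * a * |d i| with hK
  refine ⟨-K, fun σ w hσ hw => ?_⟩
  set S := hσ.2.toFinset ∪ hw.toFinset with hS
  have hwS : {x | w x ≠ x} ⊆ ↑S := by
    intro x hx
    rw [hS]
    simp only [Finset.coe_union, Set.mem_union, Set.Finite.coe_toFinset]
    exact Or.inr (hw.mem_toFinset.mpr hx)
  have e1 : energyB lam d σ w = ∑ j ∈ S, lam j * (σ j * d (w j) - d j) := by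
    apply energyB_eq_sum
    · intro j hj
      exact Finset.mem_union_left _ (hσ.2.mem_toFinset.mpr hj)
    · intro j hj
      exact Finset.mem_union_right _ (hw.mem_toFinset.mpr hj)
  have e2 : ∑ j ∈ S, lam j * σ j * d (w j)
      = ∑ i ∈ S, lam (w.symm i) * σ (w.symm i) * d i := by
    have h := Equiv.Perm.sum_comp w S (fun i => lam (w.symm i) * σ (w.symm i) * d i) hwS
    rw [← h]
    apply Finset.sum_congr rfl
    intro j _
    simp only [Equiv.symm_apply_apply]
  have e3 : energyB lam d σ w
      = ∑ i ∈ S, (lam (w.symm i) * σ (w.symm i) * d i - lam i * d i) := by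
    rw [e1]
    have : ∑ j ∈ S, lam j * (σ j * d (w j) - d j)
        = ∑ j ∈ S, (lam j * σ j * d (w j) - lam j * d j) := by
      apply Finset.sum_congr rfl
      intro j _
      ring
    rw [this, Finset.sum_sub_distrib, e2, ← Finset.sum_sub_distrib]
  have hμd : ∀ i : J, -(a * |d i|) ≤ lam (w.symm i) * σ (w.symm i) * d i := by
    intro i
    have hμ : |lam (w.symm i) * σ (w.symm i)| ≤ a := by
      rw [abs_mul, isSign_abs hσ (w.symm i), mul_one]
      exact hle _
    have habs : |lam (w.symm i) * σ (w.symm i) * d i| ≤ a * |d i| := by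
      rw [abs_mul]
      exact mul_le_mul_of_nonneg_right hμ (abs_nonneg _)
    linarith [neg_abs_le (lam (w.symm i) * σ (w.symm i) * d i)]
  have hbound : ∀ i ∈ S, (if i ∈ Fs then -(2 * a * |d i|) else 0)
      ≤ lam (w.symm i) * σ (w.symm i) * d i - lam i * d i := by
    intro i _
    by_cases hi : i ∈ Fs
    · rw [if_pos hi]
      have hsi : lam i * d i ≤ a * |d i| := by
        calc lam i * d i ≤ |lam i * d i| := le_abs_self _
          _ = |lam i| * |d i| := abs_mul _ _
          _ ≤ a * |d i| := mul_le_mul_of_nonneg_right (hle i) (abs_nonneg _)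
      linarith [hμd i]
    · rw [if_neg hi]
      have hnot : ¬(|lam i| ≠ a ∨ 0 < lam i * d i) := by
        intro h
        exact hi (hFfin.mem_toFinset.mpr h)
      push_neg at hnot
      obtain ⟨heq, hsle⟩ := hnot
      have hsi : lam i * d i = -(a * |d i|) := by
        have habs2 : |lam i * d i| = a * |d i| := by rw [abs_mul, heq]
        rw [abs_of_nonpos hsle] at habs2
        linarith
      rw [hsi]
      linarith [hμd i]
  have hsum : ∑ i ∈ S, (if i ∈ Fs then -(2 * a * |d i|) else 0)
      ≤ energyB lam d σ w := by
    rw [e3]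
    exact Finset.sum_le_sum hbound
  have hKb : -K ≤ ∑ i ∈ S, (if i ∈ Fs then -(2 * a * |d i|) else 0) := by
    have hite : ∑ i ∈ S, (if i ∈ Fs then -(2 * a * |d i|) else 0)
        = ∑ i ∈ S ∩ Fs, -(2 * a * |d i|) := by
      rw [Finset.sum_ite_mem]
    rw [hite, hK]
    have hmono : ∑ i ∈ S ∩ Fs, (2 * a * |d i|) ≤ ∑ i ∈ Fs, 2 * a * |d i| :=
      Finset.sum_le_sum_of_subset_of_nonneg Finset.inter_subset_right
        (fun i _ _ => by positivity)
    have hneg : ∑ i ∈ S ∩ Fs, -(2 * a * |d i|) = -∑ i ∈ S ∩ Fs, (2 * a * |d i|) := by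
      rw [← Finset.sum_neg_distrib]
    rw [hneg]
    linarith
  linarith

end Aux

theorem pecD_iff_pecB (J : Type*) [Infinite J] (lam d : J → ℝ)
    (hfin : (Set.range lam).Finite) :
    PECD lam d ↔ PECB lam d := by
  constructor
  · rintro ⟨C, hC⟩
    by_cases hcase : ∀ M : ℝ, {j | M ≤ lam j * d j}.Finite
    · exact pecB_of_case2 lam d C hfin hC hcase
    · push_neg at hcase
      obtain ⟨M, hM⟩ := hcase
      exact pecB_of_case1 lam d C (-M) hC (by rw [neg_neg]; exact hM)
  · rintro ⟨C, hC⟩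
    exact ⟨C, fun σ w hσ hw => hC σ w hσ.1 hw⟩
end
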